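/- Let θ and λ be ordinals, let <_T be an iteration tree order on θ and <_X an iteration tree order on λ, and let (γ_β, δ_β)_{β<θ} be a T1-system from (θ,<_T) to (λ,<_X), with intervals I_β = [γ_β, δ_β]_X. If ξ < θ, α ∈ I_ξ, and η ≤_X α, then there exists ζ ≤_T ξ such that η ∈ I_ζ. -/

import Mathlib

universe u

/-- `r` is an iteration tree order on the ordinals below `l`:  a strict partial order such
that (i) `r β α → β < α`; (ii) `r 0 α` for all `0 < α < l`; (iii) each branch `[0, α)_r` is
linearly ordered by `r`; (iv) for each successor `α + 1 < l` the branch `[0, α + 1)_r` has an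
`r`-greatest element; (v) for each limit `α < l` the branch `[0, α)_r` is cofinal in `α` and
closed in `α`. -/
structure IsTreeOrder (l : Ordinal.{u}) (r : Ordinal.{u} → Ordinal.{u} → Prop) : Prop where
  lt_of_rel : ∀ {α β}, r α β → α < β
  lt_len : ∀ {α β}, r α β → β < l
  zero_rel : ∀ {α}, 0 < α → α < l → r 0 α
  rel_trans : ∀ {α β γ}, r α β → r β γ → r α γ
  branch_linear : ∀ {α β γ}, r α γ → r β γ → r α β ∨ α = β ∨ r β α
  pred_exists : ∀ {α}, α + 1 < l → ∃ p, r p (α + 1) ∧ ∀ γ, r γ (α + 1) → γ = p ∨ r γ p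
  limit_cofinal : ∀ {α}, α < l → Order.IsSuccLimit α → ∀ γ < α, ∃ β, γ ≤ β ∧ r β α
  limit_closed : ∀ {α}, α < l → Order.IsSuccLimit α → ∀ {μ}, Order.IsSuccLimit μ → μ < α →
    (∀ γ < μ, ∃ β, γ ≤ β ∧ β < μ ∧ r β α) → r μ α

/-- The reflexivization of the strict relation `r`: `a ≤_r b` iff `a = b ∨ r a b`. -/
def RelLE (r : Ordinal.{u} → Ordinal.{u} → Prop) (a b : Ordinal.{u}) : Prop :=
  a = b ∨ r a b

/-- `p` is the `r`-greatest element of the branch `[0, α)_r`, i.e. `p = pred_r α`. -/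
def IsTreePred (r : Ordinal.{u} → Ordinal.{u} → Prop) (p α : Ordinal.{u}) : Prop :=
  r p α ∧ ∀ γ, r γ α → RelLE r γ p

/-- `ξ ∈ I_β = [γ β, δ β]_{rX} = {ξ : γ β ≤_{rX} ξ ∧ ξ ≤_{rX} δ β}`. -/
def MemInterval (rX : Ordinal.{u} → Ordinal.{u} → Prop) (γ δ : Ordinal.{u} → Ordinal.{u})
    (β ξ : Ordinal.{u}) : Prop :=
  RelLE rX (γ β) ξ ∧ RelLE rX ξ (δ β)

/-- A T1-system from `(θ, rT)` to `(l, rX)`: ordinals `γ β ≤ δ β < l` with `γ β ≤_{rX} δ β`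
for `β < θ`, such that `γ 0 = 0`, `β ↦ γ β` is strictly increasing and continuous,
`β₀ <_T β₁ ↔ γ β₀ <_X γ β₁`, `γ (β + 1) = δ β + 1`, and `pred_X (γ (β + 1)) ∈ I_{pred_T (β+1)}`
whenever `β + 1 < θ`.  (These are exactly the tree-structure-preservation requirements,
condition T1, of a tree embedding.) -/
structure IsT1System (θ l : Ordinal.{u}) (rT rX : Ordinal.{u} → Ordinal.{u} → Prop)
    (γ δ : Ordinal.{u} → Ordinal.{u}) : Prop where
  gamma_le_delta : ∀ β < θ, γ β ≤ δ β
  delta_lt : ∀ β < θ, δ β < l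
  gamma_relLE_delta : ∀ β < θ, RelLE rX (γ β) (δ β)
  gamma_zero : 0 < θ → γ 0 = 0
  gamma_strictMono : ∀ β' β, β' < β → β < θ → γ β' < γ β
  gamma_continuous : ∀ β < θ, Order.IsSuccLimit β → γ β = sSup (γ '' Set.Iio β)
  rel_iff : ∀ β₀ < θ, ∀ β₁ < θ, (rT β₀ β₁ ↔ rX (γ β₀) (γ β₁))
  gamma_succ : ∀ β, β + 1 < θ → γ (β + 1) = δ β + 1
  pred_mem : ∀ β, β + 1 < θ → ∀ pT pX,
    IsTreePred rT pT (β + 1) → IsTreePred rX pX (γ (β + 1)) → MemInterval rX γ δ pT pX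

private lemma RelLE.trans_aux {r : Ordinal.{u} → Ordinal.{u} → Prop}
    (htr : ∀ a b c : Ordinal.{u}, r a b → r b c → r a c)
    {a b c : Ordinal.{u}} (h1 : RelLE r a b) (h2 : RelLE r b c) : RelLE r a c := by
  rcases h1 with rfl | h1
  · exact h2
  · rcases h2 with rfl | h2
    · exact Or.inr h1
    · exact Or.inr (htr _ _ _ h1 h2)

private lemma RelLE.trans_lt_aux {r : Ordinal.{u} → Ordinal.{u} → Prop}
    (htr : ∀ a b c : Ordinal.{u}, r a b → r b c → r a c)
    {a b c : Ordinal.{u}} (h1 : RelLE r a b) (h2 : r b c) : r a c := by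
  rcases h1 with rfl | h1
  · exact h2
  · exact htr _ _ _ h1 h2

/-- If `(γ, δ)` is a T1-system from `(θ, rT)` to `(l, rX)`, `ξ < θ`, `α ∈ I_ξ` and
`η ≤_X α`, then `η ∈ I_ζ` for some `ζ ≤_T ξ`. -/
theorem treeEmbedding_intervals_cover_branches
    {θ l : Ordinal.{u}} {rT rX : Ordinal.{u} → Ordinal.{u} → Prop}
    {γ δ : Ordinal.{u} → Ordinal.{u}}
    (hT : IsTreeOrder θ rT) (hX : IsTreeOrder l rX)
    (hsys : IsT1System θ l rT rX γ δ)
    {ξ α η : Ordinal.{u}} (hξ : ξ < θ) (hα : MemInterval rX γ δ ξ α)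
    (hη : RelLE rX η α) :
    ∃ ζ, RelLE rT ζ ξ ∧ MemInterval rX γ δ ζ η := by
  induction ξ using Ordinal.induction generalizing α with
  | h ξ IH =>
  -- Either `γ ξ ≤_X η` (then `ζ = ξ` works) or `η <_X γ ξ`.
  have key : RelLE rX (γ ξ) η ∨ rX η (γ ξ) := by
    rcases hη with rfl | hηα
    · exact Or.inl hα.1
    · rcases hα.1 with heq | hγα
      · exact Or.inr (heq ▸ hηα)
      · rcases hX.branch_linear hηα hγα with h | h | h
        · exact Or.inr h
        · exact Or.inl (Or.inl h.symm)
        · exact Or.inl (Or.inr h)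
  rcases key with h1 | h2
  · exact ⟨ξ, Or.inl rfl, h1,
      RelLE.trans_aux (r := rX) (fun _ _ _ h h' => hX.rel_trans h h') hη hα.2⟩
  · rcases Ordinal.zero_or_succ_or_isSuccLimit ξ with rfl | ⟨β, rfl⟩ | hlim
    · -- `ξ = 0`: impossible, since `γ 0 = 0` and nothing is `<_X 0`.
      rw [hsys.gamma_zero hξ] at h2
      exact absurd (hX.lt_of_rel h2) (not_lt_zero (a := η))
    · -- successor case
      simp only [← Ordinal.add_one_eq_succ] at hξ hα h2 IH ⊢
      -- predecessor in T
      obtain ⟨pT, hpT⟩ := hT.pred_exists hξ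
      have hpT' : IsTreePred rT pT (β + 1) := ⟨hpT.1, fun g hg => hpT.2 g hg⟩
      -- predecessor in X
      have hsucc : γ (β + 1) = δ β + 1 := hsys.gamma_succ β hξ
      have hlt : δ β + 1 < l := by
        rw [← hsucc]
        exact lt_of_le_of_lt (hsys.gamma_le_delta _ hξ) (hsys.delta_lt _ hξ)
      obtain ⟨pX, hpX⟩ := hX.pred_exists hlt
      have hpX' : IsTreePred rX pX (γ (β + 1)) := by
        rw [hsucc]; exact ⟨hpX.1, fun g hg => hpX.2 g hg⟩
      have hmem : MemInterval rX γ δ pT pX := hsys.pred_mem β hξ pT pX hpT' hpX'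
      have hηpX : RelLE rX η pX := hpX'.2 η h2
      have hpTlt : pT < β + 1 := hT.lt_of_rel hpT'.1
      obtain ⟨ζ, hζpT, hζmem⟩ :=
        IH pT hpTlt (hpTlt.trans hξ) hmem hηpX
      exact ⟨ζ, Or.inr (RelLE.trans_lt_aux (r := rT) (fun _ _ _ h h' => hT.rel_trans h h') hζpT hpT'.1),
        hζmem⟩
    · -- limit case
      have hηlt : η < γ ξ := hX.lt_of_rel h2
      rw [hsys.gamma_continuous ξ hξ hlim] at hηlt
      obtain ⟨b, hb, hηb⟩ := exists_lt_of_lt_csSup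
        ⟨γ 0, Set.mem_image_of_mem γ (Set.mem_Iio.mpr hlim.pos)⟩ hηlt
      obtain ⟨β', hβ', rfl⟩ := hb
      obtain ⟨β, hβ'β, hβξ⟩ := hT.limit_cofinal hξ hlim β' (Set.mem_Iio.mp hβ')
      have hβlt : β < ξ := hT.lt_of_rel hβξ
      have hβθ : β < θ := hβlt.trans hξ
      have hηγβ : η < γ β := by
        rcases eq_or_lt_of_le hβ'β with rfl | hlt'
        · exact hηb
        · exact hηb.trans (hsys.gamma_strictMono β' β hlt' hβθ)
      have hγβγξ : rX (γ β) (γ ξ) := (hsys.rel_iff β hβθ ξ hξ).mp hβξ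
      have hηγβX : rX η (γ β) := by
        rcases hX.branch_linear h2 hγβγξ with h | h | h
        · exact h
        · exact absurd h hηγβ.ne
        · exact absurd (hX.lt_of_rel h) hηγβ.asymm
      have hmemβ : MemInterval rX γ δ β (γ β) :=
        ⟨Or.inl rfl, hsys.gamma_relLE_delta β hβθ⟩
      obtain ⟨ζ, hζβ, hζmem⟩ := IH β hβlt hβθ hmemβ (Or.inr hηγβX)
      exact ⟨ζ, Or.inr (RelLE.trans_lt_aux (r := rT) (fun _ _ _ h h' => hT.rel_trans h h') hζβ hβξ), hζmem⟩
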